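/- Let p ≥ q ≥ r be positive integers with gcd(p,q,r)=1 such that q divides p. Then for every L-free set S ⊆ {1,...,n} (for the equation px+qy=rz) with largest element M divisible by q (set M = 0 if no element of S is divisible by q), we have |S| ≤ ⌈(p+q−r)M/(p+q)⌉ + ⌈(n−M)(q−1)/q⌉. -/

import Mathlib

lemma ceil_nat_sub_div (a b c : ℕ) :
    ⌈(a : ℚ) - (b : ℚ) / (c : ℚ)⌉ = (a : ℤ) - (b / c : ℕ) := by
  rw [sub_eq_add_neg, add_comm, Int.ceil_add_natCast, Int.ceil_neg]
  rw [show ((b:ℚ)) = ((b:ℤ):ℚ) by push_cast; ring]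
  rw [Rat.floor_intCast_div_natCast]
  push_cast
  omega

theorem stmt17 (p q r n M : ℕ) (hqp : q ≤ p) (hrq : r ≤ q) (hr : 0 < r)
    (hgcd : Nat.gcd (Nat.gcd p q) r = 1) (hdvd : q ∣ p)
    (S : Finset ℕ) (hS : S ⊆ Finset.Icc 1 n)
    (hfree : ∀ x ∈ S, ∀ y ∈ S, ∀ z ∈ S, p * x + q * y ≠ r * z)
    (hM : (M = 0 ∧ ∀ x ∈ S, ¬ q ∣ x) ∨ (M ∈ S ∧ q ∣ M ∧ ∀ x ∈ S, q ∣ x → x ≤ M)) :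
    (S.card : ℤ) ≤ ⌈(((p : ℚ) + q - r) * M) / ((p : ℚ) + q)⌉ +
      ⌈(((n : ℚ) - M) * ((q : ℚ) - 1)) / q⌉ := by
  have hq : 0 < q := lt_of_lt_of_le hr hrq
  have hp : 0 < p := lt_of_lt_of_le hq hqp
  have hMn : M ≤ n := by
    rcases hM with ⟨h0, _⟩ | ⟨hMS, _, _⟩
    · omega
    · exact (Finset.mem_Icc.mp (hS hMS)).2
  have hqM : q ∣ M := by
    rcases hM with ⟨h0, _⟩ | ⟨_, h, _⟩
    · simp [h0]
    · exact h
  obtain ⟨K, hK⟩ : ∃ K, K = r * M / (p + q) := ⟨_, rfl⟩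
  obtain ⟨D, hD⟩ : ∃ D, D = (n - M) / q := ⟨_, rfl⟩
  have hDle : D ≤ n - M := hD ▸ Nat.div_le_self _ _
  have hKle : (p + q) * K ≤ r * M := by
    rw [hK, mul_comm]; exact Nat.div_mul_le_self _ _
  have hKM : K ≤ M := by
    have h1 : r * M ≤ q * M := Nat.mul_le_mul_right M hrq
    have h2 : q * M ≤ (p + q) * M := Nat.mul_le_mul_right M (by omega)
    exact Nat.le_of_mul_le_mul_left (le_trans hKle (le_trans h1 h2)) (by omega)
  -- key1 : small part
  have key1 : (S ∩ Finset.Icc 1 M).card ≤ M - K := by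
    rcases hM with ⟨h0, _⟩ | ⟨hMS, hqM', _⟩
    · simp [h0]
    set y : ℕ → ℕ := fun x => (r * M - p * x) / q with hy
    have hyprop : ∀ x ∈ S ∩ Finset.Icc 1 K,
        p * x + q * y x = r * M ∧ K + 1 ≤ y x ∧ y x ≤ M ∧ y x ∉ S := by
      intro x hx
      rw [Finset.mem_inter, Finset.mem_Icc] at hx
      obtain ⟨hxS, hx1, hxK⟩ := hx
      have hdvd2 : q ∣ r * M - p * x :=
        Nat.dvd_sub (Dvd.dvd.mul_left hqM r) (Dvd.dvd.mul_right hdvd x)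
      have hpqK : (p + q) * K = p * K + q * K := by ring
      have hxle : p * x ≤ p * K := Nat.mul_le_mul_left p hxK
      have hstrict : q * K + p * x < r * M := by
        rcases Nat.lt_or_ge (q * K + p * x) (r * M) with h | h
        · exact h
        · exfalso
          have h2 : p * x = p * K := by omega
          have h3 : x = K := Nat.eq_of_mul_eq_mul_left hp h2
          have hne : (p + q) * x ≠ r * M := fun hcon =>
            hfree x hxS x hxS M hMS (by rw [← hcon]; ring)
          rw [h3] at hne
          omega
      have heq : q * y x = r * M - p * x := by
        simp only [hy]
        exact Nat.mul_div_cancel' hdvd2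
      have hpx : p * x ≤ r * M := by omega
      refine ⟨by omega, ?_, ?_, ?_⟩
      · have : q * K < q * y x := by omega
        exact Nat.lt_of_mul_lt_mul_left this
      · have h1 : r * M ≤ q * M := Nat.mul_le_mul_right M hrq
        have : q * y x ≤ q * M := by omega
        exact Nat.le_of_mul_le_mul_left this hq
      · intro hyS
        exact hfree x hxS (y x) hyS M hMS (by omega)
    have hinj : Set.InjOn y ↑(S ∩ Finset.Icc 1 K) := by
      intro a ha b hb hab
      obtain ⟨ha1, _, _, _⟩ := hyprop a (Finset.mem_coe.mp ha)
      obtain ⟨hb1, _, _, _⟩ := hyprop b (Finset.mem_coe.mp hb)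
      rw [hab] at ha1
      have : p * a = p * b := by omega
      exact Nat.eq_of_mul_eq_mul_left hp this
    have hsplit : S ∩ Finset.Icc 1 M = (S ∩ Finset.Icc 1 K) ∪ (S ∩ Finset.Icc (K+1) M) := by
      ext a
      simp only [Finset.mem_inter, Finset.mem_Icc, Finset.mem_union, ← and_or_left]
      exact and_congr_right fun _ => by omega
    have hdisj : Disjoint (S ∩ Finset.Icc 1 K) (S ∩ Finset.Icc (K+1) M) := by
      apply Finset.disjoint_left.mpr
      intro a ha hb
      rw [Finset.mem_inter, Finset.mem_Icc] at ha hb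
      omega
    rw [hsplit, Finset.card_union_of_disjoint hdisj]
    have himg : ((S ∩ Finset.Icc 1 K).image y) ∪ (S ∩ Finset.Icc (K+1) M) ⊆ Finset.Icc (K+1) M := by
      intro a ha
      rw [Finset.mem_union] at ha
      rcases ha with ha | ha
      · obtain ⟨x, hx, rfl⟩ := Finset.mem_image.mp ha
        obtain ⟨_, h2, h3, _⟩ := hyprop x hx
        exact Finset.mem_Icc.mpr ⟨h2, h3⟩
      · rw [Finset.mem_inter] at ha
        exact ha.2
    have hdisj2 : Disjoint ((S ∩ Finset.Icc 1 K).image y) (S ∩ Finset.Icc (K+1) M) := by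
      apply Finset.disjoint_left.mpr
      intro a ha hb
      obtain ⟨x, hx, rfl⟩ := Finset.mem_image.mp ha
      obtain ⟨_, _, _, h4⟩ := hyprop x hx
      rw [Finset.mem_inter] at hb
      exact h4 hb.1
    have hcard : ((S ∩ Finset.Icc 1 K).image y).card = (S ∩ Finset.Icc 1 K).card :=
      Finset.card_image_of_injOn hinj
    have := Finset.card_le_card himg
    rw [Finset.card_union_of_disjoint hdisj2, hcard, Nat.card_Icc] at this
    omega
  -- key2 : large part
  have hnotdvd : ∀ x ∈ S, M < x → ¬ q ∣ x := by
    rcases hM with ⟨h0, h1⟩ | ⟨_, _, h2⟩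
    · intro x hx _; exact h1 x hx
    · intro x hx hMx hdx; exact absurd (h2 x hx hdx) (by omega)
  have key2 : (S ∩ Finset.Icc (M+1) n).card ≤ (n - M) - D := by
    have hsub : S ∩ Finset.Icc (M+1) n ⊆ (Finset.Ioc M n).filter (fun x => ¬ q ∣ x) := by
      intro x hx
      rw [Finset.mem_inter, Finset.mem_Icc] at hx
      rw [Finset.mem_filter, Finset.mem_Ioc]
      exact ⟨⟨by omega, hx.2.2⟩, hnotdvd x hx.1 (by omega)⟩
    refine (Finset.card_le_card hsub).trans ?_
    obtain ⟨A, hA⟩ : ∃ A, A = n / q := ⟨_, rfl⟩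
    obtain ⟨B, hB⟩ : ∃ B, B = M / q := ⟨_, rfl⟩
    have hsplitI : Finset.Ioc 0 n = Finset.Ioc 0 M ∪ Finset.Ioc M n :=
      (Finset.Ioc_union_Ioc_eq_Ioc (by omega) hMn).symm
    have hdI : Disjoint (Finset.Ioc 0 M) (Finset.Ioc M n) := by
      apply Finset.disjoint_left.mpr
      intro a ha hb
      rw [Finset.mem_Ioc] at ha hb
      omega
    have h1 : ((Finset.Ioc M n).filter (q ∣ ·)).card + B = A := by
      have e1 := Nat.Ioc_filter_dvd_card_eq_div n q
      have e2 := Nat.Ioc_filter_dvd_card_eq_div M q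
      rw [← hA] at e1
      rw [← hB] at e2
      have : ((Finset.Ioc 0 n).filter (q ∣ ·)).card
          = ((Finset.Ioc 0 M).filter (q ∣ ·)).card + ((Finset.Ioc M n).filter (q ∣ ·)).card := by
        rw [hsplitI, Finset.filter_union,
          Finset.card_union_of_disjoint (Finset.disjoint_filter_filter hdI)]
      omega
    have h2 := Finset.card_filter_add_card_filter_not (s := Finset.Ioc M n) (p := (q ∣ ·))
    rw [Nat.card_Ioc] at h2
    have h3 : D + B = A := by
      obtain ⟨m, rfl⟩ := hqM
      have e : (n - q * m) / q + m = n / q := by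
        conv_rhs => rw [show n = (n - q * m) + q * m by omega]
        rw [Nat.add_mul_div_left _ _ hq]
      rw [← hA] at e
      rw [hD, hB, Nat.mul_div_cancel_left m hq]
      exact e
    omega
  -- assemble
  have hsubS : S ⊆ (S ∩ Finset.Icc 1 M) ∪ (S ∩ Finset.Icc (M+1) n) := by
    intro a ha
    have h := Finset.mem_Icc.mp (hS ha)
    simp only [Finset.mem_union, Finset.mem_inter, Finset.mem_Icc]
    rcases le_or_gt a M with h' | h'
    · exact Or.inl ⟨ha, h.1, h'⟩
    · exact Or.inr ⟨ha, by omega, h.2⟩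
  have hcards : S.card ≤ (M - K) + ((n - M) - D) := by
    calc S.card ≤ ((S ∩ Finset.Icc 1 M) ∪ (S ∩ Finset.Icc (M+1) n)).card :=
          Finset.card_le_card hsubS
    _ ≤ (S ∩ Finset.Icc 1 M).card + (S ∩ Finset.Icc (M+1) n).card := Finset.card_union_le _ _
    _ ≤ (M - K) + ((n - M) - D) := Nat.add_le_add key1 key2
  have e1 : (((p : ℚ) + q - r) * M) / ((p : ℚ) + q)
      = ((M : ℕ) : ℚ) - ((r * M : ℕ) : ℚ) / (((p + q : ℕ)) : ℚ) := by
    have hpq : ((p : ℚ) + q) ≠ 0 := by positivity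
    push_cast
    field_simp
  have e2 : (((n : ℚ) - M) * ((q : ℚ) - 1)) / q
      = ((n - M : ℕ) : ℚ) - ((n - M : ℕ) : ℚ) / ((q : ℕ) : ℚ) := by
    have hq0 : ((q : ℚ)) ≠ 0 := by positivity
    rw [Nat.cast_sub hMn]
    push_cast
    field_simp
  rw [e1, e2, ceil_nat_sub_div, ceil_nat_sub_div, ← hK, ← hD]
  clear hK hD
  push_cast
  omega
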